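/- Let R and R' be weighted unilateral shifts on ℓ²(ℕ) with weights (c_k)_{k≥1} and (c'_k)_{k≥1} respectively, where 0 ≤ c_k ≤ c'_k for all k ≥ 1. Then for every n ∈ ℕ, the moment ⟨e_0, (R + R*)^n e_0⟩ is a nonnegative real number which is at most ⟨e_0, (R' + R'*)^n e_0⟩. -/

import Mathlib

open MeasureTheory
open scoped InnerProductSpace ComplexOrder

noncomputable abbrev ell2 : Type := lp (fun _ : ℕ => ℂ) 2

/-- The canonical orthonormal basis vectors of `ℓ²(ℕ)`. -/
noncomputable def e (k : ℕ) : ell2 := lp.single 2 k 1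

lemma inner_e (j : ℕ) (x : ell2) : ⟪e j, x⟫_ℂ = x j := by
  simp [e, lp.inner_single_left]

lemma inner_e_e (j k : ℕ) : ⟪e j, e k⟫_ℂ = if k = j then 1 else 0 := by
  rw [inner_e]; simp [e, lp.single_apply, eq_comm]; simp [Pi.single_apply]

lemma ext_of_inner {x y : ell2} (h : ∀ j, ⟪e j, x⟫_ℂ = ⟪e j, y⟫_ℂ) : x = y := by
  apply lp.ext; funext j; simpa [inner_e] using h j

lemma adj_e_zero (c : ℕ → ℝ) (R : ell2 →L[ℂ] ell2)
    (hR : ∀ k : ℕ, R (e k) = (c (k + 1) : ℂ) • e (k + 1)) :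
    ContinuousLinearMap.adjoint R (e 0) = 0 := by
  apply ext_of_inner
  intro j
  rw [ContinuousLinearMap.adjoint_inner_right, hR j]
  simp [inner_e_e]

lemma adj_e_succ (c : ℕ → ℝ) (R : ell2 →L[ℂ] ell2)
    (hR : ∀ k : ℕ, R (e k) = (c (k + 1) : ℂ) • e (k + 1)) (m : ℕ) :
    ContinuousLinearMap.adjoint R (e (m + 1)) = (c (m + 1) : ℂ) • e m := by
  apply ext_of_inner
  intro j
  rw [ContinuousLinearMap.adjoint_inner_right, hR j, inner_smul_left, inner_smul_right,
    inner_e_e, inner_e_e]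
  by_cases h : m = j <;> simp [h, Complex.conj_ofReal]

lemma recur (c : ℕ → ℝ) (R : ell2 →L[ℂ] ell2)
    (hR : ∀ k : ℕ, R (e k) = (c (k + 1) : ℂ) • e (k + 1)) (k : ℕ) (y : ell2) :
    ⟪e k, (R + ContinuousLinearMap.adjoint R) y⟫_ℂ =
      (if hk : k = 0 then 0 else (c k : ℂ) * ⟪e (k - 1), y⟫_ℂ) +
        (c (k + 1) : ℂ) * ⟪e (k + 1), y⟫_ℂ := by
  have h1 : ⟪e k, R y⟫_ℂ = if hk : k = 0 then 0 else (c k : ℂ) * ⟪e (k - 1), y⟫_ℂ := by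
    rw [← ContinuousLinearMap.adjoint_inner_left]
    cases k with
    | zero => rw [adj_e_zero c R hR]; simp
    | succ m =>
      rw [adj_e_succ c R hR m, inner_smul_left, Complex.conj_ofReal]
      simp
  have h2 : ⟪e k, (ContinuousLinearMap.adjoint R) y⟫_ℂ = (c (k + 1) : ℂ) * ⟪e (k + 1), y⟫_ℂ := by
    rw [ContinuousLinearMap.adjoint_inner_right, hR k, inner_smul_left, Complex.conj_ofReal]
  simp only [ContinuousLinearMap.add_apply, inner_add_right, h1, h2]

theorem moments_monotone (c c' : ℕ → ℝ)
    (hcc' : ∀ k : ℕ, 0 ≤ c (k + 1) ∧ c (k + 1) ≤ c' (k + 1))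
    (R R' : ell2 →L[ℂ] ell2)
    (hR : ∀ k : ℕ, R (e k) = (c (k + 1) : ℂ) • e (k + 1))
    (hR' : ∀ k : ℕ, R' (e k) = (c' (k + 1) : ℂ) • e (k + 1)) (n : ℕ) :
    0 ≤ ⟪e 0, ((R + ContinuousLinearMap.adjoint R) ^ n) (e 0)⟫_ℂ ∧
    ⟪e 0, ((R + ContinuousLinearMap.adjoint R) ^ n) (e 0)⟫_ℂ ≤
      ⟪e 0, ((R' + ContinuousLinearMap.adjoint R') ^ n) (e 0)⟫_ℂ := by
  have key : ∀ n k,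
      0 ≤ ⟪e k, ((R + ContinuousLinearMap.adjoint R) ^ n) (e 0)⟫_ℂ ∧
      ⟪e k, ((R + ContinuousLinearMap.adjoint R) ^ n) (e 0)⟫_ℂ ≤
        ⟪e k, ((R' + ContinuousLinearMap.adjoint R') ^ n) (e 0)⟫_ℂ := by
    intro n
    induction n with
    | zero =>
      intro k
      simp only [pow_zero, ContinuousLinearMap.one_apply, inner_e_e]
      by_cases h : (0 : ℕ) = k <;> simp [h]
    | succ n ih =>
      intro k
      have hstep : ∀ m, ((R + ContinuousLinearMap.adjoint R) ^ (m + 1)) (e 0) =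
          (R + ContinuousLinearMap.adjoint R)
            (((R + ContinuousLinearMap.adjoint R) ^ m) (e 0)) := by
        intro m; rw [pow_succ']; rfl
      have hstep' : ∀ m, ((R' + ContinuousLinearMap.adjoint R') ^ (m + 1)) (e 0) =
          (R' + ContinuousLinearMap.adjoint R')
            (((R' + ContinuousLinearMap.adjoint R') ^ m) (e 0)) := by
        intro m; rw [pow_succ']; rfl
      rw [hstep, hstep', recur c R hR, recur c' R' hR']
      have hc1 : (0:ℂ) ≤ (c (k+1) : ℂ) := by
        rw [Complex.zero_le_real]; exact (hcc' k).1
      have hc1' : (0:ℂ) ≤ (c' (k+1) : ℂ) := by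
        rw [Complex.zero_le_real]; exact le_trans (hcc' k).1 (hcc' k).2
      have hcle : (c (k+1) : ℂ) ≤ (c' (k+1) : ℂ) := by
        rw [Complex.real_le_real]; exact (hcc' k).2
      have t2 : (0:ℂ) ≤ (c (k + 1) : ℂ) * ⟪e (k + 1), ((R + ContinuousLinearMap.adjoint R) ^ n) (e 0)⟫_ℂ :=
        mul_nonneg hc1 (ih (k+1)).1
      have t2' : (c (k + 1) : ℂ) * ⟪e (k + 1), ((R + ContinuousLinearMap.adjoint R) ^ n) (e 0)⟫_ℂ ≤
          (c' (k + 1) : ℂ) * ⟪e (k + 1), ((R' + ContinuousLinearMap.adjoint R') ^ n) (e 0)⟫_ℂ :=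
        mul_le_mul hcle (ih (k+1)).2 (ih (k+1)).1 hc1'
      by_cases hk : k = 0
      · subst hk; simpa using And.intro t2 t2'
      · simp only [dif_neg hk]
        obtain ⟨m, rfl⟩ : ∃ m, k = m + 1 := ⟨k - 1, (Nat.succ_pred_eq_of_pos (Nat.pos_of_ne_zero hk)).symm⟩
        have hck : (0:ℂ) ≤ (c (m+1) : ℂ) := by rw [Complex.zero_le_real]; exact (hcc' m).1
        have hck' : (0:ℂ) ≤ (c' (m+1) : ℂ) := by
          rw [Complex.zero_le_real]; exact le_trans (hcc' m).1 (hcc' m).2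
        have hckle : (c (m+1) : ℂ) ≤ (c' (m+1) : ℂ) := by
          rw [Complex.real_le_real]; exact (hcc' m).2
        have t1 := mul_nonneg hck (ih m).1
        have t1' := mul_le_mul hckle (ih m).2 (ih m).1 hck'
        simp only [Nat.add_sub_cancel]
        exact ⟨add_nonneg t1 t2, add_le_add t1' t2'⟩
  exact key n 0
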